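/- For ordered rooted binary trees S and T with n internal nodes and e common edge pairs, n - e - 1 ≤ d_R(S,T) ≤ 2(n - e - 1); consequently the quantity n - e - 1 is a 2-approximation of the rotation distance: d_R(S,T) ≤ 2(n - e - 1) ≤ 2 d_R(S,T). -/

import Mathlib

inductive BT : Type
  | leaf : BT
  | node : BT → BT → BT
deriving DecidableEq

namespace BT

/-- number of internal nodes -/
def size : BT → ℕ
  | leaf => 0
  | node l r => size l + size r + 1

/-- number of leaves -/
def nl (t : BT) : ℕ := size t + 1

/-- one (right) rotation somewhere in the tree -/
inductive Rot : BT → BT → Prop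
  | root (a b c : BT) : Rot (node (node a b) c) (node a (node b c))
  | congrL {l l' : BT} (r : BT) : Rot l l' → Rot (node l r) (node l' r)
  | congrR (l : BT) {r r' : BT} : Rot r r' → Rot (node l r) (node l r')

/-- a rotation move: a right rotation or its inverse (a left rotation) -/
def Move (s t : BT) : Prop := Rot s t ∨ Rot t s

/-- `Chain n s t`: `s` is transformed into `t` by `n` rotation moves -/
inductive Chain : ℕ → BT → BT → Prop
  | refl (t : BT) : Chain 0 t t
  | step {n : ℕ} {s u t : BT} : Move s u → Chain n u t → Chain (n + 1) s t

/-- rotation distance -/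
noncomputable def dR (s t : BT) : ℕ := sInf {n | Chain n s t}

def isNode : BT → Bool
  | leaf => false
  | node _ _ => true

/-- the multiset of leaf partitions induced by internal edges, where the leaves of the
tree are numbered from `k` on, left to right; each internal edge is recorded by the
set of leaf numbers below it. -/
def iparts : BT → ℕ → Multiset (Finset ℕ)
  | leaf, _ => 0
  | node l r, k =>
      ((if isNode l then {Finset.Ico k (k + nl l)} else 0) + iparts l k)
        + ((if isNode r then {Finset.Ico (k + nl l) (k + nl l + nl r)} else 0)
            + iparts r (k + nl l))

/-- number of common edge pairs -/
def commonEdges (s t : BT) : ℕ := ((iparts s 0) ∩ (iparts t 0)).card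

/- ---------- basics ---------- -/

lemma nl_node (l r : BT) : nl (node l r) = nl l + nl r := by
  simp [nl, size]; omega

lemma nl_pos (t : BT) : 1 ≤ nl t := Nat.succ_le_succ (Nat.zero_le _)

lemma eq_leaf_of_size (t : BT) (h : size t = 0) : t = leaf := by
  cases t with
  | leaf => rfl
  | node l r => simp [size] at h

lemma isNode_of_size {t : BT} (h : 1 ≤ size t) : isNode t = true := by
  cases t with
  | leaf => simp [size] at h
  | node l r => rfl

lemma one_le_size_of_isNode {t : BT} (h : isNode t = true) : 1 ≤ size t := by
  cases t with
  | leaf => simp [isNode] at h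
  | node l r => simp [size]

lemma two_le_nl_of_isNode {t : BT} (h : isNode t = true) : 2 ≤ nl t := by
  have := one_le_size_of_isNode h; simp [nl]; omega

lemma Rot.size_eq {s t : BT} (h : Rot s t) : size s = size t := by
  induction h with
  | root a b c => simp [size]; omega
  | congrL r _ ih => simp [size]; omega
  | congrR l _ ih => simp [size]; omega

lemma Rot.nl_eq {s t : BT} (h : Rot s t) : nl s = nl t := by
  simp [nl, h.size_eq]

/- ---------- chain lemmas ---------- -/

lemma Move.symm {s t : BT} (h : Move s t) : Move t s := Or.symm h

lemma Chain.single {s t : BT} (h : Move s t) : Chain 1 s t := Chain.step h (Chain.refl t)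

lemma Chain.append {m k : ℕ} {s u t : BT} (h1 : Chain m s u) (h2 : Chain k u t) :
    Chain (m + k) s t := by
  induction h1 with
  | refl => simpa using h2
  | step mv _ ih =>
      have := Chain.step mv (ih h2)
      rwa [Nat.add_right_comm] at this

lemma Chain.symm {m : ℕ} {s t : BT} (h : Chain m s t) : Chain m t s := by
  induction h with
  | refl => exact Chain.refl _
  | step mv _ ih => exact ih.append (Chain.single mv.symm)

lemma Move.nodeL {l l' : BT} (r : BT) (h : Move l l') : Move (node l r) (node l' r) :=
  h.imp (Rot.congrL r) (Rot.congrL r)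

lemma Move.nodeR (l : BT) {r r' : BT} (h : Move r r') : Move (node l r) (node l r') :=
  h.imp (Rot.congrR l) (Rot.congrR l)

lemma Chain.nodeL {m : ℕ} {l l' : BT} (r : BT) (h : Chain m l l') :
    Chain m (node l r) (node l' r) := by
  induction h with
  | refl => exact Chain.refl _
  | step mv _ ih => exact Chain.step (mv.nodeL r) ih

lemma Chain.nodeR {m : ℕ} (l : BT) {r r' : BT} (h : Chain m r r') :
    Chain m (node l r) (node l r') := by
  induction h with
  | refl => exact Chain.refl _
  | step mv _ ih => exact Chain.step (mv.nodeR l) ih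

/- ---------- comb ---------- -/

def rcomb : ℕ → BT
  | 0 => leaf
  | n + 1 => node leaf (rcomb n)

def rsp : BT → ℕ
  | leaf => 0
  | node _ r => rsp r + 1

lemma rsp_le_size (t : BT) : rsp t ≤ size t := by
  induction t with
  | leaf => simp [rsp, size]
  | node l r ihl ihr => simp [rsp, size]; omega

lemma toComb (t : BT) : ∃ k, Chain k t (rcomb (size t)) ∧ k + rsp t = size t := by
  suffices H : ∀ m t, 2 * size t - rsp t ≤ m →
      ∃ k, Chain k t (rcomb (size t)) ∧ k + rsp t = size t from H _ t le_rfl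
  intro m
  induction m with
  | zero =>
      intro t ht
      have h1 := rsp_le_size t
      have h0 : size t = 0 := by omega
      rw [eq_leaf_of_size t h0]
      exact ⟨0, Chain.refl _, rfl⟩
  | succ m ih =>
      intro t ht
      match t with
      | leaf => exact ⟨0, Chain.refl _, rfl⟩
      | node leaf r =>
          have h1 := rsp_le_size r
          obtain ⟨k, hc, hk⟩ := ih r (by simp [size, rsp] at ht ⊢; omega)
          refine ⟨k, ?_, by simp [rsp, size]; omega⟩
          have hrc : rcomb (size (node leaf r)) = node leaf (rcomb (size r)) := by
            simp [size, rcomb]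
          rw [hrc]
          exact Chain.nodeR leaf hc
      | node (node a b) c =>
          have h1 := rsp_le_size (node a b)
          have h2 := rsp_le_size c
          have hsz : size (node a (node b c)) = size (node (node a b) c) := by
            simp [size]; omega
          obtain ⟨k, hc, hk⟩ := ih (node a (node b c)) (by simp [size, rsp] at ht ⊢; omega)
          refine ⟨k + 1, ?_, by simp [size, rsp] at hk ⊢; omega⟩
          have : rcomb (size (node a (node b c))) = rcomb (size (node (node a b) c)) := by
            rw [hsz]
          rw [← this]
          exact Chain.step (Or.inl (Rot.root a b c)) hc


/- ---------- graft ---------- -/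

def graft : BT → ℕ → BT → BT
  | leaf, _, u => u
  | node l r, j, u => if j < nl l then node (graft l j u) r else node l (graft r (j - nl l) u)

lemma graft_size (u c : BT) (j : ℕ) : size (graft c j u) = size c + size u := by
  induction c generalizing j with
  | leaf => simp [graft, size]
  | node l r ihl ihr =>
      simp only [graft]
      split
      · simp [size, ihl]; omega
      · simp [size, ihr]; omega

lemma graft_nl (u c : BT) (j : ℕ) : nl (graft c j u) = nl c + size u := by
  simp [nl, graft_size]; omega

lemma graft_isNode {u : BT} (hu : isNode u = true) (c : BT) (j : ℕ) :
    isNode (graft c j u) = true := by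
  cases c with
  | leaf => simpa [graft] using hu
  | node l r => simp only [graft]; split <;> rfl

lemma Rot.graft {c c' : BT} (h : Rot c c') (j : ℕ) (u : BT) :
    Rot (graft c j u) (graft c' j u) := by
  induction h generalizing j with
  | root a b c =>
      simp only [BT.graft, nl_node]
      split_ifs with h1 h2 h3 h4 h5 h6 h7 h8 <;> try omega
      · exact Rot.root _ _ _
      · exact Rot.root _ _ _
      · have e : j - (nl a + nl b) = j - nl a - nl b := by omega
        rw [e]; exact Rot.root _ _ _
  | congrL r hr ih =>
      rename_i l l'
      have hnl : nl l' = nl l := hr.nl_eq.symm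
      simp only [BT.graft, hnl]
      split
      · exact Rot.congrL r (ih j)
      · exact Rot.congrL _ hr
  | congrR l hr ih =>
      rename_i r r'
      simp only [BT.graft]
      split
      · exact Rot.congrR _ hr
      · exact Rot.congrR l (ih _)

lemma Chain.graftInner (c : BT) (j : ℕ) {m : ℕ} {u u' : BT} (h : Chain m u u') :
    Chain m (graft c j u) (graft c j u') := by
  induction c generalizing j with
  | leaf => simpa [graft] using h
  | node l r ihl ihr =>
      simp only [graft]
      split
      · exact Chain.nodeL r (ihl j)
      · exact Chain.nodeR l (ihr _)

lemma Chain.graftOuter {m : ℕ} {c c' : BT} (h : Chain m c c') (j : ℕ) (u : BT) :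
    Chain m (graft c j u) (graft c' j u) := by
  induction h with
  | refl => exact Chain.refl _
  | step mv _ ih =>
      exact Chain.step (mv.imp (fun hr => hr.graft j u) (fun hr => hr.graft j u)) ih
/- ---------- multiset helpers ---------- -/

lemma ms_inter_add_left {α : Type*} [DecidableEq α] (s t u : Multiset α) :
    (s + t) ∩ u ≤ s ∩ u + t ∩ u := by
  rw [Multiset.le_iff_count]
  intro a
  simp only [Multiset.count_inter, Multiset.count_add]
  omega

lemma ms_inter_add_right {α : Type*} [DecidableEq α] (s t u : Multiset α) :
    s ∩ (t + u) ≤ s ∩ t + s ∩ u := by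
  rw [Multiset.le_iff_count]
  intro a
  simp only [Multiset.count_inter, Multiset.count_add]
  omega

lemma ms_inter_zero {α : Type*} [DecidableEq α] {A B : Multiset α}
    (h : ∀ x ∈ A, x ∉ B) : A ∩ B = 0 := by
  apply Multiset.eq_zero_of_forall_notMem
  intro x hx
  rw [Multiset.mem_inter] at hx
  exact h x hx.1 hx.2

lemma ms_card_inter_triple {α : Type*} [DecidableEq α] {A B C A' B' C' : Multiset α}
    (hAB : A ∩ B' = 0) (hAC : A ∩ C' = 0) (hBA : B ∩ A' = 0) (hBC : B ∩ C' = 0)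
    (hCA : C ∩ A' = 0) (hCB : C ∩ B' = 0) :
    ((A + B + C) ∩ (A' + B' + C')).card ≤
      (A ∩ A').card + (B ∩ B').card + (C ∩ C').card := by
  have h1 : (A + B + C) ∩ (A' + B' + C') ≤
      A ∩ (A' + B' + C') + B ∩ (A' + B' + C') + C ∩ (A' + B' + C') :=
    le_trans (ms_inter_add_left _ _ _) (add_le_add (ms_inter_add_left _ _ _) le_rfl)
  have hA : A ∩ (A' + B' + C') ≤ A ∩ A' := by
    refine le_trans (ms_inter_add_right _ _ _) ?_
    rw [hAC, add_zero]
    refine le_trans (ms_inter_add_right _ _ _) ?_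
    rw [hAB, add_zero]
  have hB : B ∩ (A' + B' + C') ≤ B ∩ B' := by
    refine le_trans (ms_inter_add_right _ _ _) ?_
    rw [hBC, add_zero]
    refine le_trans (ms_inter_add_right _ _ _) ?_
    rw [hBA, zero_add]
  have hC : C ∩ (A' + B' + C') ≤ C ∩ C' := by
    calc C ∩ (A' + B' + C') ≤ C ∩ (A' + B') + C ∩ C' := ms_inter_add_right _ _ _
      _ ≤ (C ∩ A' + C ∩ B') + C ∩ C' := add_le_add (ms_inter_add_right _ _ _) le_rfl
      _ = C ∩ C' := by rw [hCA, hCB]; simp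
  calc ((A + B + C) ∩ (A' + B' + C')).card
      ≤ (A ∩ (A' + B' + C') + B ∩ (A' + B' + C') + C ∩ (A' + B' + C')).card :=
        Multiset.card_le_card h1
    _ ≤ (A ∩ A' + B ∩ B' + C ∩ C').card := by
        apply Multiset.card_le_card
        exact add_le_add (add_le_add hA hB) hC
    _ = (A ∩ A').card + (B ∩ B').card + (C ∩ C').card := by
        simp [Multiset.card_add]

lemma ms_map_inter {α β : Type*} [DecidableEq α] [DecidableEq β] (f : α → β)
    (A B : Multiset α) (h : ∀ x ∈ A, ∀ y ∈ B, f x = f y → x = y) :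
    (A ∩ B).map f = A.map f ∩ B.map f := by
  ext z
  rw [Multiset.count_inter, Multiset.count_map, Multiset.count_map, Multiset.count_map]
  by_cases hA : ∃ x ∈ A, z = f x
  · obtain ⟨x, hxA, rfl⟩ := hA
    by_cases hB : ∃ y ∈ B, f x = f y
    · obtain ⟨y, hyB, hxy⟩ := hB
      obtain rfl := h x hxA y hyB hxy
      have eA : A.filter (fun a => f x = f a) = A.filter (fun a => x = a) :=
        Multiset.filter_congr (fun a ha =>
          ⟨fun hfa => (h a ha x hyB hfa.symm).symm, fun hxa => by rw [← hxa]⟩)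
      have eB : B.filter (fun a => f x = f a) = B.filter (fun a => x = a) :=
        Multiset.filter_congr (fun a ha =>
          ⟨fun hfa => h x hxA a ha hfa, fun hxa => by rw [← hxa]⟩)
      have eI : (A ∩ B).filter (fun a => f x = f a) = (A ∩ B).filter (fun a => x = a) :=
        Multiset.filter_congr (fun a ha =>
          ⟨fun hfa => (h a (Multiset.mem_of_le (Multiset.inter_le_left) ha) x hyB
            hfa.symm).symm, fun hxa => by rw [← hxa]⟩)
      rw [eA, eB, eI, ← Multiset.count_eq_card_filter_eq, ← Multiset.count_eq_card_filter_eq,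
        ← Multiset.count_eq_card_filter_eq, ← Multiset.count_inter]
    · have eB : B.filter (fun a => f x = f a) = 0 :=
        Multiset.filter_eq_nil.mpr (fun a ha hfa => hB ⟨a, ha, hfa⟩)
      have eI : (A ∩ B).filter (fun a => f x = f a) = 0 :=
        Multiset.filter_eq_nil.mpr (fun a ha hfa =>
          hB ⟨a, Multiset.mem_of_le (Multiset.inter_le_right) ha, hfa⟩)
      rw [eB, eI]
      simp
  · have eA : A.filter (fun a => z = f a) = 0 :=
      Multiset.filter_eq_nil.mpr (fun a ha hfa => hA ⟨a, ha, hfa⟩)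
    have eI : (A ∩ B).filter (fun a => z = f a) = 0 :=
      Multiset.filter_eq_nil.mpr (fun a ha hfa =>
        hA ⟨a, Multiset.mem_of_le (Multiset.inter_le_left) ha, hfa⟩)
    rw [eA, eI]
    simp
/- ---------- characterization of edges ---------- -/

lemma mem_iparts : ∀ (t : BT) (k : ℕ) (J : Finset ℕ), J ∈ iparts t k →
    ∃ i j, J = Finset.Ico i j ∧ k ≤ i ∧ i + 2 ≤ j ∧ j ≤ k + nl t ∧ j + 1 ≤ i + nl t := by
  intro t
  induction t with
  | leaf => simp [iparts]
  | node l r ihl ihr =>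
      intro k J hJ
      have hnl := nl_pos l
      have hnr := nl_pos r
      rw [iparts, Multiset.mem_add, Multiset.mem_add, Multiset.mem_add] at hJ
      rcases hJ with (h | h) | (h | h)
      · split_ifs at h with hl
        · rw [Multiset.mem_singleton] at h
          refine ⟨k, k + nl l, h, le_rfl, ?_, ?_, ?_⟩ <;>
            first
              | (have := two_le_nl_of_isNode hl; rw [nl_node]; omega)
              | (have := two_le_nl_of_isNode hl; omega)
        · simp at h
      · obtain ⟨i, j, hJ, h1, h2, h3, h4⟩ := ihl k J h
        exact ⟨i, j, hJ, h1, h2, by rw [nl_node]; omega, by rw [nl_node]; omega⟩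
      · split_ifs at h with hr
        · rw [Multiset.mem_singleton] at h
          refine ⟨k + nl l, k + nl l + nl r, h, by omega, ?_, ?_, ?_⟩ <;>
            first
              | (have := two_le_nl_of_isNode hr; rw [nl_node]; omega)
              | (have := two_le_nl_of_isNode hr; omega)
        · simp at h
      · obtain ⟨i, j, hJ, h1, h2, h3, h4⟩ := ihr (k + nl l) J h
        exact ⟨i, j, hJ, by omega, h2, by rw [nl_node]; omega, by rw [nl_node]; omega⟩

/- ---------- shift ---------- -/

lemma iparts_shift (t : BT) : ∀ m d : ℕ,
    iparts t (m + d) = (iparts t m).map (Finset.image (· + d)) := by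
  induction t with
  | leaf => intro m d; simp [iparts]
  | node l r ihl ihr =>
      intro m d
      have e1 : m + d + nl l = m + nl l + d := by omega
      simp only [iparts]
      rw [e1, ihl m d, ihr (m + nl l) d]
      simp only [Multiset.map_add, apply_ite (Multiset.map (Finset.image (· + d))),
        Multiset.map_singleton, Multiset.map_zero, Finset.image_add_right_Ico]
      have e3 : m + nl l + nl r + d = m + nl l + d + nl r := by omega
      rw [e3]

lemma inter_card_shift (s t : BT) (k : ℕ) :
    ((iparts s k) ∩ (iparts t k)).card = ((iparts s 0) ∩ (iparts t 0)).card := by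
  have hs : iparts s k = (iparts s 0).map (Finset.image (· + k)) := by
    have := iparts_shift s 0 k; simpa using this
  have ht : iparts t k = (iparts t 0).map (Finset.image (· + k)) := by
    have := iparts_shift t 0 k; simpa using this
  have hinj : ∀ x ∈ iparts s 0, ∀ y ∈ iparts t 0,
      Finset.image (· + k) x = Finset.image (· + k) y → x = y := by
    intro x _ y _ hxy
    exact Finset.image_injective (add_left_injective k) hxy
  rw [hs, ht, ← ms_map_inter _ _ _ hinj, Multiset.card_map]

/- ---------- interval endpoints ---------- -/

lemma Ico_eq_Ico {a b c d : ℕ} (hab : a < b) (h : Finset.Ico a b = Finset.Ico c d) :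
    a = c ∧ b = d := by
  have h1 : a ∈ Finset.Ico c d := h ▸ Finset.mem_Ico.mpr ⟨le_rfl, hab⟩
  rw [Finset.mem_Ico] at h1
  have hcd : c < d := by omega
  have h2 : c ∈ Finset.Ico a b := h.symm ▸ Finset.mem_Ico.mpr ⟨le_rfl, hcd⟩
  have h3 : b - 1 ∈ Finset.Ico c d := h ▸ Finset.mem_Ico.mpr (by omega)
  have h4 : d - 1 ∈ Finset.Ico a b := h.symm ▸ Finset.mem_Ico.mpr (by omega)
  rw [Finset.mem_Ico] at h2 h3 h4
  omega

/- ---------- the widening map W ---------- -/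

def fmap (p d x : ℕ) : ℕ := if x ≤ p then x else x + d

noncomputable def W (p d : ℕ) (I : Finset ℕ) : Finset ℕ :=
  if h : I.Nonempty then Finset.Ico (fmap p d (I.min' h)) (fmap p d (I.max' h + 1)) else ∅

lemma W_Ico (p d : ℕ) {i j : ℕ} (hij : i < j) :
    W p d (Finset.Ico i j) = Finset.Ico (fmap p d i) (fmap p d j) := by
  have hne : (Finset.Ico i j).Nonempty := by rw [Finset.nonempty_Ico]; exact hij
  have hmin : (Finset.Ico i j).min' hne = i := by
    refine le_antisymm (Finset.min'_le _ _ (Finset.mem_Ico.mpr ⟨le_rfl, hij⟩)) ?_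
    exact Finset.le_min' _ _ _ (fun x hx => (Finset.mem_Ico.mp hx).1)
  have hmax : (Finset.Ico i j).max' hne = j - 1 := by
    refine le_antisymm (Finset.max'_le _ _ _ (fun x hx => by
      have := Finset.mem_Ico.mp hx; omega)) ?_
    exact Finset.le_max' _ _ (Finset.mem_Ico.mpr (by omega))
  rw [W, dif_pos hne, hmin, hmax]
  congr 2
  omega

lemma fmap_lt {p d x y : ℕ} (h : x < y) : fmap p d x < fmap p d y := by
  unfold fmap; split_ifs <;> omega

lemma fmap_inj {p d x y : ℕ} (h : fmap p d x = fmap p d y) : x = y := by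
  unfold fmap at h; split_ifs at h <;> omega

lemma W_inj {p d i j i' j' : ℕ} (hij : i < j) (hij' : i' < j')
    (h : W p d (Finset.Ico i j) = W p d (Finset.Ico i' j')) :
    Finset.Ico i j = Finset.Ico i' j' := by
  rw [W_Ico p d hij, W_Ico p d hij'] at h
  obtain ⟨h1, h2⟩ := Ico_eq_Ico (fmap_lt hij) h
  rw [fmap_inj h1, fmap_inj h2]
/- ---------- extraction of a subtree at an edge ---------- -/

lemma iparts_extract : ∀ (t : BT) (k a b : ℕ), Finset.Ico a b ∈ iparts t k →
    ∃ c u, isNode u = true ∧ t = graft c (a - k) u ∧ a - k + 1 ≤ nl c ∧ nl u = b - a ∧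
      size c + size u = size t ∧ k ≤ a := by
  intro t
  induction t with
  | leaf => simp [iparts]
  | node l r ihl ihr =>
      intro k a b hJ
      have hnl := nl_pos l
      have hnr := nl_pos r
      rw [iparts, Multiset.mem_add, Multiset.mem_add, Multiset.mem_add] at hJ
      rcases hJ with (h | h) | (h | h)
      · split_ifs at h with hl
        · rw [Multiset.mem_singleton] at h
          have h2l := two_le_nl_of_isNode hl
          obtain ⟨hak, hb⟩ := Ico_eq_Ico (show k < k + nl l by omega) h.symm
          refine ⟨node leaf r, l, hl, ?_, ?_, by omega, by simp [size]; omega, by omega⟩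
          · have e0 : a - k = 0 := by omega
            rw [e0]
            simp [graft, nl, size]
          · have e : nl (node leaf r) = 1 + nl r := by rw [nl_node]; simp [nl, size]
            omega
        · simp at h
      · obtain ⟨c', u, hu, hgr, hle, hnlu, hsz, hka⟩ := ihl k a b h
        refine ⟨node c' r, u, hu, ?_, ?_, hnlu, by simp [size]; omega, hka⟩
        · have hlt : a - k < nl c' := by omega
          simp only [graft]
          rw [if_pos hlt, ← hgr]
        · rw [nl_node]
          omega
      · split_ifs at h with hr
        · rw [Multiset.mem_singleton] at h
          have h2r := two_le_nl_of_isNode hr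
          obtain ⟨hak, hb⟩ := Ico_eq_Ico (show k + nl l < k + nl l + nl r by omega) h.symm
          refine ⟨node l leaf, r, hr, ?_, ?_, by omega, by simp [size]; omega, by omega⟩
          · have e0 : a - k = nl l := by omega
            rw [e0]
            simp [graft, nl, size]
          · have e : nl (node l leaf) = nl l + 1 := by rw [nl_node]; simp [nl, size]
            omega
        · simp at h
      · obtain ⟨c', u, hu, hgr, hle, hnlu, hsz, hka⟩ := ihr (k + nl l) a b h
        refine ⟨node l c', u, hu, ?_, ?_, hnlu, by simp [size]; omega, by omega⟩
        · have hge : ¬ (a - k < nl l) := by omega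
          simp only [graft]
          rw [if_neg hge]
          have e0 : a - k - nl l = a - (k + nl l) := by omega
          rw [e0, ← hgr]
        · rw [nl_node]
          omega


/- ---------- W action on iparts pieces ---------- -/

lemma map_W_id (t : BT) (k p d : ℕ) (h : k + nl t ≤ p) :
    (iparts t k).map (W p d) = iparts t k := by
  conv_rhs => rw [← Multiset.map_id (iparts t k)]
  apply Multiset.map_congr rfl
  intro J hJ
  obtain ⟨i, j, rfl, h1, h2, h3, h4⟩ := mem_iparts t k J hJ
  rw [W_Ico p d (by omega)]
  simp [fmap, show i ≤ p by omega, show j ≤ p by omega]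

lemma map_W_shift (t : BT) (k p d : ℕ) (h : p < k) :
    (iparts t k).map (W p d) = iparts t (k + d) := by
  rw [iparts_shift t k d]
  apply Multiset.map_congr rfl
  intro J hJ
  obtain ⟨i, j, rfl, h1, h2, h3, h4⟩ := mem_iparts t k J hJ
  rw [W_Ico p d (by omega), Finset.image_add_right_Ico]
  simp [fmap, show ¬ i ≤ p by omega, show ¬ j ≤ p by omega]

lemma W_Ico_widen (p d : ℕ) {i j : ℕ} (hi : i ≤ p) (hj : p < j) :
    W p d (Finset.Ico i j) = Finset.Ico i (j + d) := by
  rw [W_Ico p d (by omega)]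
  simp [fmap, hi, show ¬ j ≤ p by omega]

lemma W_Ico_shift (p d : ℕ) {i j : ℕ} (hi : p < i) (hj : i < j) :
    W p d (Finset.Ico i j) = Finset.Ico (i + d) (j + d) := by
  rw [W_Ico p d hj]
  simp [fmap, show ¬ i ≤ p by omega, show ¬ j ≤ p by omega]




lemma nl_leaf : nl leaf = 1 := rfl

lemma eq_leaf_of_not_isNode {t : BT} (h : ¬ isNode t = true) : t = leaf := by
  cases t with
  | leaf => rfl
  | node l r => simp [isNode] at h

lemma W_Ico_keep (p d : ℕ) {i j : ℕ} (hij : i < j) (hj : j ≤ p) :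
    W p d (Finset.Ico i j) = Finset.Ico i j := by
  rw [W_Ico p d hij]
  simp [fmap, show i ≤ p by omega, show j ≤ p by omega]

lemma iparts_graft {u : BT} (hu : isNode u = true) :
    ∀ (c : BT) (k a : ℕ), a + 1 ≤ nl c →
    iparts (graft c a u) k =
      (iparts c k).map (W (k + a) (size u)) +
      (if isNode c then ({Finset.Ico (k + a) (k + a + nl u)} : Multiset (Finset ℕ)) else 0) +
      iparts u (k + a) := by
  intro c
  induction c with
  | leaf =>
      intro k a ha
      have ha0 : a = 0 := by simp [nl, size] at ha; omega
      subst ha0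
      simp [graft, iparts, isNode]
  | node l r ihl ihr =>
      intro k a ha
      have hnl := nl_pos l
      have hnr := nl_pos r
      have h2u := two_le_nl_of_isNode hu
      have hsu : 1 ≤ size u := one_le_size_of_isNode hu
      have henu : nl u = size u + 1 := rfl
      rw [nl_node] at ha
      by_cases hal : a < nl l
      · -- grafting into the left subtree
        have hgr : graft (node l r) a u = node (graft l a u) r := by
          simp only [graft]; rw [if_pos hal]
        rw [hgr]
        simp only [iparts]
        rw [if_pos (graft_isNode hu l a), graft_nl u l a]
        rw [ihl k a (by omega)]
        rw [if_pos (show isNode (node l r) = true from rfl)]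
        simp only [Multiset.map_add, apply_ite (Multiset.map (W (k + a) (size u))),
          Multiset.map_singleton, Multiset.map_zero]
        rw [map_W_shift r (k + nl l) (k + a) (size u) (by omega)]
        rw [W_Ico_widen (k + a) (size u) (show k ≤ k + a by omega)
          (show k + a < k + nl l by omega)]
        rw [W_Ico_shift (k + a) (size u) (show k + a < k + nl l by omega)
          (show k + nl l < k + nl l + nl r by omega)]
        have e1 : k + (nl l + size u) = k + nl l + size u := by omega
        have e2 : k + nl l + nl r + size u = k + nl l + size u + nl r := by omega
        rw [e1, e2]
        by_cases hl : isNode l = true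
        · rw [if_pos hl, if_pos hl]
          abel
        · rw [if_neg hl, if_neg hl]
          have hl1 : nl l = 1 := by rw [eq_leaf_of_not_isNode hl]; rfl
          have ha0 : a = 0 := by omega
          subst ha0
          rw [hl1]
          have e3 : k + 0 + nl u = k + 1 + size u := by omega
          rw [e3]
          abel
      · -- grafting into the right subtree
        have hgr : graft (node l r) a u = node l (graft r (a - nl l) u) := by
          simp only [graft]; rw [if_neg hal]
        rw [hgr]
        simp only [iparts]
        rw [if_pos (graft_isNode hu r (a - nl l)), graft_nl u r (a - nl l)]
        rw [ihr (k + nl l) (a - nl l) (by omega)]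
        have ep : k + nl l + (a - nl l) = k + a := by omega
        rw [ep]
        rw [if_pos (show isNode (node l r) = true from rfl)]
        simp only [Multiset.map_add, apply_ite (Multiset.map (W (k + a) (size u))),
          Multiset.map_singleton, Multiset.map_zero]
        rw [map_W_id l k (k + a) (size u) (by omega)]
        rw [W_Ico_widen (k + a) (size u) (show k + nl l ≤ k + a by omega)
          (show k + a < k + nl l + nl r by omega)]
        have e1 : k + nl l + (nl r + size u) = k + nl l + nl r + size u := by omega
        rw [e1]
        rw [W_Ico_keep (k + a) (size u) (show k < k + nl l by omega)
          (show k + nl l ≤ k + a by omega)]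
        by_cases hr : isNode r = true
        · rw [if_pos hr, if_pos hr]
          abel
        · rw [if_neg hr, if_neg hr]
          have hr1 : nl r = 1 := by rw [eq_leaf_of_not_isNode hr]; rfl
          have ha0 : a = nl l := by omega
          subst ha0
          rw [hr1]
          have e3 : k + nl l + nl u = k + nl l + 1 + size u := by omega
          rw [e3]
          abel




/- ---------- one rotation changes exactly one edge ---------- -/

lemma rot_isNode {s t : BT} (h : Rot s t) : isNode s = true ∧ isNode t = true := by
  cases h <;> exact ⟨rfl, rfl⟩

lemma rot_iparts {s t : BT} (h : Rot s t) : ∀ k : ℕ, ∃ A B M,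
    iparts s k = {A} + M ∧ iparts t k = {B} + M := by
  induction h with
  | root a b c =>
      intro k
      refine ⟨Finset.Ico k (k + nl a + nl b), Finset.Ico (k + nl a) (k + nl a + nl b + nl c),
        (if isNode a then {Finset.Ico k (k + nl a)} else 0) + iparts a k +
        ((if isNode b then {Finset.Ico (k + nl a) (k + nl a + nl b)} else 0) +
          iparts b (k + nl a)) +
        ((if isNode c then {Finset.Ico (k + nl a + nl b) (k + nl a + nl b + nl c)} else 0) +
          iparts c (k + nl a + nl b)), ?_, ?_⟩
      · simp only [iparts]
        rw [if_pos (show isNode (node a b) = true from rfl), nl_node]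
        have e1 : k + (nl a + nl b) = k + nl a + nl b := by omega
        rw [e1]
        abel
      · simp only [iparts]
        rw [if_pos (show isNode (node b c) = true from rfl), nl_node]
        have e1 : k + nl a + (nl b + nl c) = k + nl a + nl b + nl c := by omega
        rw [e1]
        abel
  | congrL r hr ih =>
      rename_i l l'
      intro k
      obtain ⟨A, B, M, h1, h2⟩ := ih k
      obtain ⟨hsl, hsl'⟩ := rot_isNode hr
      have hnll : nl l' = nl l := hr.nl_eq.symm
      refine ⟨A, B, {Finset.Ico k (k + nl l)} + M +
        ((if isNode r then {Finset.Ico (k + nl l) (k + nl l + nl r)} else 0) +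
          iparts r (k + nl l)), ?_, ?_⟩
      · simp only [iparts]
        rw [if_pos hsl, h1]
        abel
      · simp only [iparts]
        rw [if_pos hsl', h2, hnll]
        abel
  | congrR l hr ih =>
      rename_i r r'
      intro k
      obtain ⟨A, B, M, h1, h2⟩ := ih (k + nl l)
      obtain ⟨hsr, hsr'⟩ := rot_isNode hr
      have hnlr : nl r' = nl r := hr.nl_eq.symm
      refine ⟨A, B, (if isNode l then {Finset.Ico k (k + nl l)} else 0) + iparts l k +
        ({Finset.Ico (k + nl l) (k + nl l + nl r)} + M), ?_, ?_⟩
      · simp only [iparts]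
        rw [if_pos hsr, h1]
        abel
      · simp only [iparts]
        rw [if_pos hsr', h2, hnlr]
        abel

lemma move_iparts {s t : BT} (h : Move s t) (k : ℕ) : ∃ A B M,
    iparts s k = {A} + M ∧ iparts t k = {B} + M := by
  rcases h with h | h
  · exact rot_iparts h k
  · obtain ⟨A, B, M, h1, h2⟩ := rot_iparts h k
    exact ⟨B, A, M, h2, h1⟩

lemma chain_diff_le {m : ℕ} {s t : BT} (h : Chain m s t) :
    ((iparts s 0) - (iparts t 0)).card ≤ m := by
  induction h with
  | refl t =>
      have : iparts t 0 - iparts t 0 = 0 := by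
        ext x; simp [Multiset.count_sub]
      simp [this]
  | step mv hc ih =>
      rename_i n s u t
      obtain ⟨A, B, M, h1, h2⟩ := move_iparts mv 0
      have h3 : iparts s 0 - iparts t 0 ≤ A ::ₘ (M - iparts t 0) := by
        rw [Multiset.le_iff_count, h1]
        intro x
        simp only [Multiset.count_sub, Multiset.count_add, Multiset.count_singleton,
          Multiset.count_cons]
        split_ifs <;> omega
      have h4 : M - iparts t 0 ≤ iparts u 0 - iparts t 0 := by
        rw [Multiset.le_iff_count, h2]
        intro x
        simp only [Multiset.count_sub, Multiset.count_add, Multiset.count_singleton]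
        split_ifs <;> omega
      have := Multiset.card_le_card h3
      have := Multiset.card_le_card h4
      rw [Multiset.card_cons] at *
      omega

/- ---------- counting edges ---------- -/

lemma iparts_card (t : BT) : ∀ k, (if isNode t then 1 else 0) + (iparts t k).card = size t := by
  induction t with
  | leaf => intro k; simp [iparts, size, isNode]
  | node l r ihl ihr =>
      intro k
      have h1 := ihl k
      have h2 := ihr (k + nl l)
      simp only [iparts, size, Multiset.card_add, apply_ite Multiset.card,
        Multiset.card_singleton, Multiset.card_zero]
      rw [if_pos (show isNode (node l r) = true from rfl)]
      split_ifs at h1 h2 ⊢ <;> omega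

/- ---------- disjointness helpers ---------- -/

lemma W_not_I {p d i j q : ℕ} (h2 : i + 2 ≤ j) (hd : 1 ≤ d) (hq : q = p + d + 1) :
    W p d (Finset.Ico i j) ≠ Finset.Ico p q := by
  rw [W_Ico p d (by omega)]
  intro hEq
  obtain ⟨e1, e2⟩ := Ico_eq_Ico (fmap_lt (show i < j by omega)) hEq
  simp only [fmap] at e1 e2
  split_ifs at e1 e2 <;> omega

lemma W_not_inner {p d i j i' j' : ℕ} (h2 : i + 2 ≤ j) (hd : 1 ≤ d) (hi' : p ≤ i')
    (h2' : i' + 2 ≤ j') (hlen : j' + 1 ≤ i' + d + 1) (hj' : j' ≤ p + d + 1) :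
    W p d (Finset.Ico i j) ≠ Finset.Ico i' j' := by
  rw [W_Ico p d (by omega)]
  intro hEq
  obtain ⟨e1, e2⟩ := Ico_eq_Ico (fmap_lt (show i < j by omega)) hEq
  simp only [fmap] at e1 e2
  split_ifs at e1 e2 <;> omega

lemma I_not_inner {p d i' j' q : ℕ} (hq : q = p + d + 1) (h2' : i' + 2 ≤ j')
    (hlen : j' + 1 ≤ i' + d + 1) (hi' : p ≤ i') :
    Finset.Ico p q ≠ Finset.Ico i' j' := by
  intro hEq
  obtain ⟨e1, e2⟩ := Ico_eq_Ico (show p < q by omega) hEq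
  omega




lemma rsp_pos {t : BT} (h : isNode t = true) : 1 ≤ rsp t := by
  cases t with
  | leaf => simp [isNode] at h
  | node l r => simp [rsp]

lemma main_upper : ∀ n : ℕ, ∀ S T : BT, size S = n → size T = n → 1 ≤ n →
    ∃ k, Chain k S T ∧ k + 2 * commonEdges S T + 2 ≤ 2 * n := by
  intro n
  induction n using Nat.strong_induction_on with
  | _ n IH =>
    intro S T hS hT hn
    by_cases hE : commonEdges S T = 0
    · -- no common edges: go through the right comb
      obtain ⟨kS, hcS, hkS⟩ := toComb S
      obtain ⟨kT, hcT, hkT⟩ := toComb T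
      have hrs : 1 ≤ rsp S := rsp_pos (isNode_of_size (by omega))
      have hrt : 1 ≤ rsp T := rsp_pos (isNode_of_size (by omega))
      rw [hS] at hcS hkS
      rw [hT] at hcT hkT
      exact ⟨kS + kT, hcS.append hcT.symm, by rw [hE]; omega⟩
    · -- pick a common edge
      have hne : (iparts S 0 ∩ iparts T 0) ≠ 0 := by
        intro h0; rw [commonEdges, h0] at hE; simp at hE
      obtain ⟨J, hJ⟩ := Multiset.exists_mem_of_ne_zero hne
      rw [Multiset.mem_inter] at hJ
      obtain ⟨hJS, hJT⟩ := hJ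
      obtain ⟨a, b, rfl, -, hab2, hbS, hbn⟩ := mem_iparts S 0 _ hJS
      obtain ⟨cS, uS, huS, hSg, haS, hnuS, hszS, -⟩ := iparts_extract S 0 a b hJS
      obtain ⟨cT, uT, huT, hTg, haT, hnuT, hszT, -⟩ := iparts_extract T 0 a b hJT
      rw [Nat.sub_zero] at hSg haS hTg haT
      have hnlS : nl S = n + 1 := by simp [nl, hS]
      have henS : nl uS = size uS + 1 := rfl
      have henT : nl uT = size uT + 1 := rfl
      have hd1 : 1 ≤ size uS := one_le_size_of_isNode huS
      have hduT : size uT = size uS := by omega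
      have hdn : size uS + 1 ≤ n := by omega
      -- the two recursive chains
      obtain ⟨k1, hc1, hb1⟩ := IH (size uS) (by omega) uS uT rfl (by omega) (by omega)
      obtain ⟨k2, hc2, hb2⟩ := IH (n - size uS) (by omega) cS cT (by omega) (by omega)
        (by omega)
      have hchain : Chain (k1 + k2) S T := by
        rw [hSg, hTg]
        exact (Chain.graftInner cS a hc1).append (hc2.graftOuter a uT)
      -- decompose the edge multisets
      have hgS := iparts_graft huS cS 0 a (by omega)
      have hgT := iparts_graft huT cT 0 a (by omega)
      rw [← hSg] at hgS
      rw [← hTg] at hgT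
      rw [Nat.zero_add] at hgS hgT
      rw [hduT, (by omega : nl uT = nl uS)] at hgT
      rw [if_pos (isNode_of_size (show 1 ≤ size cS by omega))] at hgS
      rw [if_pos (isNode_of_size (show 1 ≤ size cT by omega))] at hgT
      -- the common-edge bound
      have ekey : commonEdges S T ≤
          commonEdges cS cT + 1 + commonEdges uS uT := by
        rw [commonEdges, hgS, hgT]
        have hz1 : (iparts cS 0).map (W a (size uS)) ∩
            ({Finset.Ico a (a + nl uS)} : Multiset (Finset ℕ)) = 0 := by
          apply ms_inter_zero
          intro x hx
          obtain ⟨Jx, hJx, rfl⟩ := Multiset.mem_map.mp hx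
          obtain ⟨i, j, rfl, -, h2, -, -⟩ := mem_iparts cS 0 _ hJx
          rw [Multiset.mem_singleton]
          exact W_not_I h2 hd1 (by omega)
        have hz2 : (iparts cS 0).map (W a (size uS)) ∩ iparts uT a = 0 := by
          apply ms_inter_zero
          intro x hx hx'
          obtain ⟨Jx, hJx, rfl⟩ := Multiset.mem_map.mp hx
          obtain ⟨i, j, rfl, -, h2, -, -⟩ := mem_iparts cS 0 _ hJx
          obtain ⟨i', j', hEq, hi', h2', hj', hlen⟩ := mem_iparts uT a _ hx'
          exact W_not_inner h2 hd1 hi' h2' (by omega) (by omega) hEq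
        have hz3 : ({Finset.Ico a (a + nl uS)} : Multiset (Finset ℕ)) ∩
            (iparts cT 0).map (W a (size uS)) = 0 := by
          apply ms_inter_zero
          intro x hx hx'
          rw [Multiset.mem_singleton] at hx
          subst hx
          obtain ⟨Jx, hJx, hW⟩ := Multiset.mem_map.mp hx'
          obtain ⟨i, j, rfl, -, h2, -, -⟩ := mem_iparts cT 0 _ hJx
          exact W_not_I h2 hd1 (by omega) hW
        have hz4 : ({Finset.Ico a (a + nl uS)} : Multiset (Finset ℕ)) ∩ iparts uT a = 0 := by
          apply ms_inter_zero
          intro x hx hx'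
          rw [Multiset.mem_singleton] at hx
          subst hx
          obtain ⟨i', j', hEq, hi', h2', hj', hlen⟩ := mem_iparts uT a _ hx'
          exact I_not_inner (d := size uS) (by omega) h2' (by omega) hi' hEq
        have hz5 : iparts uS a ∩ (iparts cT 0).map (W a (size uS)) = 0 := by
          apply ms_inter_zero
          intro x hx hx'
          obtain ⟨i', j', rfl, hi', h2', hj', hlen⟩ := mem_iparts uS a _ hx
          obtain ⟨Jx, hJx, hW⟩ := Multiset.mem_map.mp hx'
          obtain ⟨i, j, rfl, -, h2, -, -⟩ := mem_iparts cT 0 _ hJx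
          exact W_not_inner h2 hd1 hi' h2' (by omega) (by omega) hW
        have hz6 : iparts uS a ∩ ({Finset.Ico a (a + nl uS)} : Multiset (Finset ℕ)) = 0 := by
          apply ms_inter_zero
          intro x hx
          obtain ⟨i', j', rfl, hi', h2', hj', hlen⟩ := mem_iparts uS a _ hx
          rw [Multiset.mem_singleton]
          exact fun hEq => I_not_inner (d := size uS) (by omega) h2' (by omega) hi' hEq.symm
        refine le_trans (ms_card_inter_triple hz1 hz2 hz3 hz4 hz5 hz6) ?_
        have hmm : ((iparts cS 0).map (W a (size uS)) ∩
            (iparts cT 0).map (W a (size uS))).card = commonEdges cS cT := by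
          have hinj : ∀ x ∈ iparts cS 0, ∀ y ∈ iparts cT 0,
              W a (size uS) x = W a (size uS) y → x = y := by
            intro x hx y hy hW
            obtain ⟨i, j, rfl, -, h2, -, -⟩ := mem_iparts cS 0 _ hx
            obtain ⟨i', j', rfl, -, h2', -, -⟩ := mem_iparts cT 0 _ hy
            exact W_inj (by omega) (by omega) hW
          rw [← ms_map_inter _ _ _ hinj, Multiset.card_map, commonEdges]
        have huu : (iparts uS a ∩ iparts uT a).card = commonEdges uS uT :=
          inter_card_shift uS uT a
        rw [hmm, huu]
        have : ({Finset.Ico a (a + nl uS)} : Multiset (Finset ℕ)) ∩ {Finset.Ico a (a + nl uS)} =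
            {Finset.Ico a (a + nl uS)} := by
          ext x; simp [Multiset.count_inter]
        rw [this]
        simp
      exact ⟨k1 + k2, hchain, by omega⟩



theorem dR_two_approximation (n e : ℕ) (S T : BT)
    (hS : S.size = n) (hT : T.size = n) (he : commonEdges S T = e) :
    n - e - 1 ≤ dR S T ∧ dR S T ≤ 2 * (n - e - 1) ∧ 2 * (n - e - 1) ≤ 2 * dR S T := by
  subst he
  rcases Nat.eq_zero_or_pos n with h0 | h1
  · subst h0
    rw [eq_leaf_of_size S hS, eq_leaf_of_size T hT]
    have hch : Chain 0 leaf leaf := Chain.refl _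
    have hd0 : dR leaf leaf = 0 :=
      Nat.le_zero.mp (Nat.sInf_le (show 0 ∈ {m | Chain m leaf leaf} from hch))
    have hce : commonEdges leaf leaf = 0 := by simp [commonEdges, iparts]
    rw [hd0, hce]
    omega
  · obtain ⟨k, hch, hbd⟩ := main_upper n S T hS hT h1
    have hdle : dR S T ≤ k := Nat.sInf_le (show k ∈ {m | Chain m S T} from hch)
    have hdch : Chain (dR S T) S T :=
      Nat.sInf_mem (⟨k, hch⟩ : Set.Nonempty {m | Chain m S T})
    have hlow : ((iparts S 0) - (iparts T 0)).card ≤ dR S T := chain_diff_le hdch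
    have hcS := iparts_card S 0
    rw [if_pos (isNode_of_size (by omega))] at hcS
    have hsplit : ((iparts S 0) - (iparts T 0)).card + commonEdges S T =
        (iparts S 0).card := by
      have hsub : (iparts S 0) - (iparts T 0) ≤ iparts S 0 := Multiset.sub_le_self _ _
      have hint : iparts S 0 ∩ iparts T 0 = iparts S 0 - ((iparts S 0) - (iparts T 0)) := by
        ext x
        simp only [Multiset.count_inter, Multiset.count_sub]
        omega
      have hcle := Multiset.card_le_card hsub
      rw [commonEdges, hint, Multiset.card_sub hsub]
      omega
    rw [hS] at hcS
    refine ⟨by omega, by omega, by omega⟩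

end BT
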